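/- Let n ≥ 1, 0 < s < n/2, λ ≥ 1, and suppose (d_γ) are nonnegative reals indexed by a countable set Γ with d_γ ≥ d₀ ≥ d for all γ, where d ≥ 0 is fixed, and Σ_γ e^{-s·d_γ} ≤ A · min{1, d^{-k}} for some k ≥ n/2. Then Σ_γ λ^{n/2} e^{-(n/2)·d_γ} ≤ C·A·λ^n·(1+λd)^{-n/2} for a constant C depending only on n, s, k. -/

import Mathlib

lemma core_aux (n k d lam : ℝ) (hn : 1 ≤ n) (hk : n / 2 ≤ k) (hd : 0 ≤ d)
    (hlam : 1 ≤ lam) :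
    min 1 (d ^ (-k)) ≤ 2 ^ (n / 2) * lam ^ (n / 2) * (1 + lam * d) ^ (-(n / 2)) := by
  have hlam0 : (0:ℝ) < lam := lt_of_lt_of_le one_pos hlam
  have hP0 : (0:ℝ) < 1 + lam * d := by nlinarith
  have hn2 : (0:ℝ) ≤ n / 2 := by linarith
  have hrw : 2 ^ (n / 2) * lam ^ (n / 2) * (1 + lam * d) ^ (-(n / 2))
      = ((2 * lam) / (1 + lam * d)) ^ (n / 2) := by
    rw [Real.div_rpow (by positivity) hP0.le, Real.mul_rpow (by norm_num) hlam0.le,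
      Real.rpow_neg hP0.le, div_eq_mul_inv]
    ring
  rw [hrw]
  have hbase : 2 / (1 + d) ≤ (2 * lam) / (1 + lam * d) := by
    rw [div_le_div_iff₀ (by linarith) hP0]
    nlinarith
  have hmid : min 1 (d ^ (-k)) ≤ (2 / (1 + d)) ^ (n / 2) := by
    rcases le_total d 1 with h1 | h1
    · refine le_trans (min_le_left _ _) ?_
      apply Real.one_le_rpow ?_ hn2
      rw [le_div_iff₀ (by linarith)]
      linarith
    · refine le_trans (min_le_right _ _) ?_
      have hd1 : (1:ℝ) ≤ d := h1
      have h2 : d ^ (-k) ≤ d ^ (-(n / 2)) :=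
        Real.rpow_le_rpow_of_exponent_le hd1 (by linarith)
      refine h2.trans ?_
      have h3 : d ^ (-(n / 2)) = (1 / d) ^ (n / 2) := by
        rw [Real.rpow_neg (by positivity), one_div, Real.inv_rpow (by positivity)]
      rw [h3]
      apply Real.rpow_le_rpow (by positivity) ?_ hn2
      rw [div_le_div_iff₀ (by linarith) (by linarith)]
      nlinarith
  refine hmid.trans (Real.rpow_le_rpow (by positivity) hbase hn2)

theorem stmt_16 (n s k : ℝ) (hn : 1 ≤ n) (hs : 0 < s) (hsn : s < n / 2) (hk : n / 2 ≤ k) :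
    ∃ C > 0, ∀ (Γ : Type) (_ : Countable Γ) (dγ : Γ → ℝ) (d₀ d A lam : ℝ),
      1 ≤ lam → 0 ≤ d → d ≤ d₀ → (∀ γ, 0 ≤ dγ γ) → (∀ γ, d₀ ≤ dγ γ) →
      (∑' γ : Γ, ENNReal.ofReal (Real.exp (-s * dγ γ))) ≤
        ENNReal.ofReal (A * min 1 (d ^ (-k))) →
      (∑' γ : Γ, ENNReal.ofReal (lam ^ (n / 2) * Real.exp (-(n / 2) * dγ γ))) ≤
        ENNReal.ofReal (C * A * lam ^ n * (1 + lam * d) ^ (-(n / 2))) := by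
  refine ⟨2 ^ (n / 2), by positivity, ?_⟩
  intro Γ _ dγ d₀ d A lam hlam hd hdd₀ hdγ0 hdγd₀ hsum
  have hlam0 : (0:ℝ) < lam := lt_of_lt_of_le one_pos hlam
  have hln : (0:ℝ) ≤ lam ^ (n / 2) := Real.rpow_nonneg hlam0.le _
  have key : ∀ γ, ENNReal.ofReal (lam ^ (n / 2) * Real.exp (-(n / 2) * dγ γ)) ≤
      ENNReal.ofReal (lam ^ (n / 2)) * ENNReal.ofReal (Real.exp (-s * dγ γ)) := by
    intro γ
    rw [← ENNReal.ofReal_mul hln]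
    apply ENNReal.ofReal_le_ofReal
    apply mul_le_mul_of_nonneg_left _ hln
    apply Real.exp_le_exp.mpr
    nlinarith [hdγ0 γ]
  calc (∑' γ : Γ, ENNReal.ofReal (lam ^ (n / 2) * Real.exp (-(n / 2) * dγ γ)))
      ≤ ∑' γ : Γ, ENNReal.ofReal (lam ^ (n / 2)) * ENNReal.ofReal (Real.exp (-s * dγ γ)) :=
        ENNReal.tsum_le_tsum key
    _ = ENNReal.ofReal (lam ^ (n / 2)) * ∑' γ : Γ, ENNReal.ofReal (Real.exp (-s * dγ γ)) :=
        ENNReal.tsum_mul_left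
    _ ≤ ENNReal.ofReal (lam ^ (n / 2)) * ENNReal.ofReal (A * min 1 (d ^ (-k))) :=
        mul_le_mul_right hsum _
    _ ≤ ENNReal.ofReal (2 ^ (n / 2) * A * lam ^ n * (1 + lam * d) ^ (-(n / 2))) := by
        rcases le_or_gt 0 A with hA | hA
        · rw [← ENNReal.ofReal_mul hln]
          apply ENNReal.ofReal_le_ofReal
          have hmin0 : 0 ≤ min 1 (d ^ (-k)) := le_min one_pos.le (Real.rpow_nonneg hd _)
          have hcore := core_aux n k d lam hn hk hd hlam
          calc lam ^ (n / 2) * (A * min 1 (d ^ (-k)))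
              = A * (min 1 (d ^ (-k)) * lam ^ (n / 2)) := by ring
            _ ≤ A * ((2 ^ (n / 2) * lam ^ (n / 2) * (1 + lam * d) ^ (-(n / 2))) * lam ^ (n / 2)) := by
                apply mul_le_mul_of_nonneg_left (mul_le_mul_of_nonneg_right hcore hln) hA
            _ = 2 ^ (n / 2) * A * (lam ^ (n / 2) * lam ^ (n / 2)) * (1 + lam * d) ^ (-(n / 2)) := by
                ring
            _ = 2 ^ (n / 2) * A * lam ^ n * (1 + lam * d) ^ (-(n / 2)) := by
                rw [← Real.rpow_add hlam0]
                ring_nf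
        · have : A * min 1 (d ^ (-k)) ≤ 0 := by
            have hmin0 : 0 ≤ min 1 (d ^ (-k)) := le_min one_pos.le (Real.rpow_nonneg hd _)
            exact mul_nonpos_of_nonpos_of_nonneg hA.le hmin0
          rw [ENNReal.ofReal_eq_zero.mpr this, mul_zero]
          exact zero_le
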